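/- arXiv:2303.04328 — 3 statements merged into one kernel-verified Lean document; each statement's English description precedes it below -/
import Mathlib

section
/- If f : ℝⁿ → ℝ is differentiable, L-smooth, and m-strongly convex with 0 < m ≤ L, then for all x, y: (mL/(m+L))‖y − x‖² + (1/(m+L))‖∇f(y) − ∇f(x)‖² ≤ ⟨∇f(y) − ∇f(x), y − x⟩. -/
open RealInnerProductSpace

section aux

variable {E : Type*} [NormedAddCommGroup E] [InnerProductSpace ℝ E] [CompleteSpace E]

lemma line_hasDerivAt (f : E → ℝ) (f' : E → E) (hdiff : ∀ x, HasGradientAt f (f' x) x)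
    (x d : E) (t : ℝ) :
    HasDerivAt (fun s : ℝ => f (x + s • d)) ⟪f' (x + t • d), d⟫ t := by
  have h1 : HasDerivAt (fun s : ℝ => x + s • d) d t := by
    simpa using ((hasDerivAt_id t).smul_const d).const_add x
  have h2 := (hdiff (x + t • d)).hasFDerivAt.comp_hasDerivAt t h1
  simp [InnerProductSpace.toDual_apply_apply] at h2
  exact h2

lemma descent_of_bound (f : E → ℝ) (f' : E → E) (K : ℝ) (x d : E)
    (hd : ∀ t : ℝ, HasDerivAt (fun s : ℝ => f (x + s • d)) ⟪f' (x + t • d), d⟫ t)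
    (hb : ∀ t ∈ Set.Icc (0:ℝ) 1, ⟪f' (x + t • d) - f' x, d⟫ ≤ K * t * ‖d‖ ^ 2) :
    f (x + d) ≤ f x + ⟪f' x, d⟫ + K / 2 * ‖d‖ ^ 2 := by
  set χ : ℝ → ℝ := fun t => f (x + t • d) - t * ⟪f' x, d⟫ - K / 2 * t ^ 2 * ‖d‖ ^ 2 with hχdef
  have hχ : ∀ t : ℝ, HasDerivAt χ (⟪f' (x + t • d), d⟫ - ⟪f' x, d⟫ - K * t * ‖d‖ ^ 2) t := by
    intro t
    have h1 := (hd t).sub ((hasDerivAt_id t).mul_const ⟪f' x, d⟫)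
    have h2 : HasDerivAt (fun s : ℝ => K / 2 * s ^ 2 * ‖d‖ ^ 2)
        (K * t * ‖d‖ ^ 2) t := by
      have := ((hasDerivAt_pow 2 t).const_mul (K / 2)).mul_const (‖d‖ ^ 2)
      refine this.congr_deriv ?_
      ring
    have h3 := h1.sub h2
    refine h3.congr_deriv ?_
    ring
  have hanti : AntitoneOn χ (Set.Icc 0 1) := by
    apply antitoneOn_of_deriv_nonpos (convex_Icc 0 1)
    · exact Continuous.continuousOn (by
        have : Continuous χ := by
          have : Differentiable ℝ χ := fun t => (hχ t).differentiableAt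
          exact this.continuous
        exact this)
    · intro t _
      exact (hχ t).differentiableAt.differentiableWithinAt
    · intro t ht
      rw [interior_Icc] at ht
      rw [(hχ t).deriv]
      have := hb t ⟨le_of_lt ht.1, le_of_lt ht.2⟩
      rw [inner_sub_left] at this
      linarith
  have h01 : χ 1 ≤ χ 0 := hanti (by norm_num) (by norm_num) (by norm_num)
  simp only [hχdef, one_smul, zero_smul, add_zero, one_pow, one_mul, zero_mul,
    ne_eq, OfNat.ofNat_ne_zero, not_false_eq_true, zero_pow, mul_zero, sub_zero] at h01
  linarith

lemma lower_of_bound (f : E → ℝ) (f' : E → E) (x d : E)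
    (hd : ∀ t : ℝ, HasDerivAt (fun s : ℝ => f (x + s • d)) ⟪f' (x + t • d), d⟫ t)
    (hb : ∀ t ∈ Set.Icc (0:ℝ) 1, 0 ≤ ⟪f' (x + t • d) - f' x, d⟫) :
    f x + ⟪f' x, d⟫ ≤ f (x + d) := by
  set ψ : ℝ → ℝ := fun t => f (x + t • d) - t * ⟪f' x, d⟫ with hψdef
  have hψ : ∀ t : ℝ, HasDerivAt ψ (⟪f' (x + t • d), d⟫ - ⟪f' x, d⟫) t := by
    intro t
    have h := (hd t).sub ((hasDerivAt_id t).mul_const ⟪f' x, d⟫)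
    simp at h
    exact h
  have hmon : MonotoneOn ψ (Set.Icc 0 1) := by
    apply monotoneOn_of_deriv_nonneg (convex_Icc 0 1)
    · exact (Differentiable.continuous fun t => (hψ t).differentiableAt).continuousOn
    · intro t _
      exact (hψ t).differentiableAt.differentiableWithinAt
    · intro t ht
      rw [interior_Icc] at ht
      rw [(hψ t).deriv]
      have := hb t ⟨le_of_lt ht.1, le_of_lt ht.2⟩
      rw [inner_sub_left] at this
      linarith
  have h01 : ψ 0 ≤ ψ 1 := hmon (by norm_num) (by norm_num) (by norm_num)
  simp only [hψdef, one_smul, zero_smul, add_zero, one_mul, zero_mul, sub_zero] at h01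
  linarith

lemma baillon_haddad (f : E → ℝ) (f' : E → E) (K : ℝ) (hK : 0 < K)
    (hdesc : ∀ x d, f (x + d) ≤ f x + ⟪f' x, d⟫ + K / 2 * ‖d‖ ^ 2)
    (hlow : ∀ x d, f x + ⟪f' x, d⟫ ≤ f (x + d)) :
    ∀ x y, f x + ⟪f' x, y - x⟫ + 1 / (2 * K) * ‖f' y - f' x‖ ^ 2 ≤ f y := by
  intro x y
  set u : E := f' y - f' x with hu
  set z : E := y - (1 / K) • u with hz
  have h1 := hdesc y (z - y)
  have h2 := hlow x (z - x)
  rw [add_sub_cancel] at h1 h2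
  have hzy : z - y = -((1 / K) • u) := by rw [hz]; abel
  have e1 : ⟪f' y, z - y⟫ = -(1 / K * ⟪f' y, u⟫) := by
    rw [hzy, inner_neg_right, real_inner_smul_right]
  have e2 : ‖z - y‖ ^ 2 = (1 / K) ^ 2 * ‖u‖ ^ 2 := by
    rw [hzy, norm_neg, norm_smul]
    simp [mul_pow, abs_of_pos (one_div_pos.mpr hK)]
  have e3 : ⟪f' x, z - x⟫ = ⟪f' x, y - x⟫ - 1 / K * ⟪f' x, u⟫ := by
    have : z - x = (y - x) - (1 / K) • u := by rw [hz]; abel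
    rw [this, inner_sub_right, real_inner_smul_right]
  have e4 : ⟪f' y, u⟫ - ⟪f' x, u⟫ = ‖u‖ ^ 2 := by
    rw [← inner_sub_left, ← hu, real_inner_self_eq_norm_sq]
  rw [e1, e2] at h1
  rw [e3] at h2
  have hK' : (0:ℝ) < 2 * K := by linarith
  have key : 1 / K * ‖u‖ ^ 2 - K / 2 * ((1 / K) ^ 2 * ‖u‖ ^ 2) = 1 / (2 * K) * ‖u‖ ^ 2 := by
    field_simp
    ring
  have e5 : 1 / K * ⟪f' y, u⟫ - 1 / K * ⟪f' x, u⟫ = 1 / K * ‖u‖ ^ 2 := by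
    rw [← mul_sub, e4]
  linarith [key, e5]

end aux

theorem smooth_strongly_convex_cocoercivity
    (n : ℕ) (f : EuclideanSpace ℝ (Fin n) → ℝ)
    (f' : EuclideanSpace ℝ (Fin n) → EuclideanSpace ℝ (Fin n))
    (m L : ℝ) (hm : 0 < m) (hmL : m ≤ L)
    (hdiff : ∀ x, HasGradientAt f (f' x) x)
    (hlip : ∀ x y, ‖f' x - f' y‖ ≤ L * ‖x - y‖)
    (hmono : ∀ x y, m * ‖x - y‖ ^ 2 ≤ ⟪x - y, f' x - f' y⟫) :
    ∀ x y, (m * L / (m + L)) * ‖y - x‖ ^ 2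
        + (1 / (m + L)) * ‖f' y - f' x‖ ^ 2
      ≤ ⟪f' y - f' x, y - x⟫ := by
  intro x y
  have hmLpos : (0:ℝ) < m + L := by linarith
  set d := y - x with hd
  set G := f' y - f' x with hG
  rcases eq_or_lt_of_le hmL with heq | hlt
  · -- case m = L
    subst heq
    have h1 : m * ‖d‖ ^ 2 ≤ ⟪G, d⟫ := by
      have := hmono y x
      rwa [← hd, ← hG, real_inner_comm] at this
    have h2 : ‖G‖ ≤ m * ‖d‖ := by
      have := hlip y x
      rwa [← hd, ← hG] at this
    have h3 : ‖G‖ ^ 2 ≤ m ^ 2 * ‖d‖ ^ 2 := by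
      nlinarith [norm_nonneg G, norm_nonneg d]
    rw [show m * m / (m + m) * ‖d‖ ^ 2 + 1 / (m + m) * ‖G‖ ^ 2
        = (m * m * ‖d‖ ^ 2 + ‖G‖ ^ 2) / (m + m) from by ring, div_le_iff₀ hmLpos]
    nlinarith [h1, h3, mul_le_mul_of_nonneg_left h1 (by linarith : (0:ℝ) ≤ 2 * m)]
  · -- case m < L
    have hKpos : (0:ℝ) < L - m := by linarith
    set g : EuclideanSpace ℝ (Fin n) → ℝ := fun z => f z - m / 2 * ‖z‖ ^ 2 with hgdef
    set g' : EuclideanSpace ℝ (Fin n) → EuclideanSpace ℝ (Fin n) :=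
      fun z => f' z - m • z with hg'def
    -- line derivatives of g
    have hdg : ∀ (p dd : EuclideanSpace ℝ (Fin n)) (t : ℝ),
        HasDerivAt (fun s : ℝ => g (p + s • dd)) ⟪g' (p + t • dd), dd⟫ t := by
      intro p dd t
      have h1 := line_hasDerivAt f f' hdiff p dd t
      have h2 : HasDerivAt (fun s : ℝ => p + s • dd) dd t := by
        simpa using ((hasDerivAt_id t).smul_const dd).const_add p
      have h3 := h2.norm_sq
      have h4 := h1.sub (h3.const_mul (m / 2))
      have h5 : ⟪g' (p + t • dd), dd⟫ =
          ⟪f' (p + t • dd), dd⟫ - m / 2 * (2 * ⟪p + t • dd, dd⟫) := by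
        rw [hg'def]
        simp only [inner_sub_left, real_inner_smul_left]
        ring
      rw [h5]
      exact h4
    -- descent lemma for f
    have hdescf : ∀ p dd, f (p + dd) ≤ f p + ⟪f' p, dd⟫ + L / 2 * ‖dd‖ ^ 2 := by
      intro p dd
      apply descent_of_bound f f' L p dd (line_hasDerivAt f f' hdiff p dd)
      intro t ht
      calc ⟪f' (p + t • dd) - f' p, dd⟫ ≤ ‖f' (p + t • dd) - f' p‖ * ‖dd‖ :=
            real_inner_le_norm _ _
        _ ≤ (L * ‖(p + t • dd) - p‖) * ‖dd‖ := by
            have := hlip (p + t • dd) p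
            nlinarith [norm_nonneg dd]
        _ = L * t * ‖dd‖ ^ 2 := by
            rw [add_sub_cancel_left, norm_smul, Real.norm_eq_abs, abs_of_nonneg ht.1]
            ring
    -- descent lemma for g with constant L - m
    have hdescg : ∀ p dd, g (p + dd) ≤ g p + ⟪g' p, dd⟫ + (L - m) / 2 * ‖dd‖ ^ 2 := by
      intro p dd
      have h1 := hdescf p dd
      have h2 : ‖p + dd‖ ^ 2 = ‖p‖ ^ 2 + 2 * ⟪p, dd⟫ + ‖dd‖ ^ 2 := norm_add_sq_real p dd
      have h3 : ⟪g' p, dd⟫ = ⟪f' p, dd⟫ - m * ⟪p, dd⟫ := by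
        rw [hg'def]; simp only [inner_sub_left, real_inner_smul_left]
      simp only [hgdef]
      rw [h2, h3]
      linarith
    -- lower bound for g (convexity)
    have hlowg : ∀ p dd, g p + ⟪g' p, dd⟫ ≤ g (p + dd) := by
      intro p dd
      apply lower_of_bound g g' p dd (hdg p dd)
      intro t ht
      have h1 : ⟪g' (p + t • dd) - g' p, dd⟫ =
          ⟪f' (p + t • dd) - f' p, dd⟫ - m * t * ‖dd‖ ^ 2 := by
        rw [hg'def]
        have : f' (p + t • dd) - m • (p + t • dd) - (f' p - m • p)
            = (f' (p + t • dd) - f' p) - (m * t) • dd := by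
          rw [smul_add, smul_smul]; abel
        rw [this, inner_sub_left, real_inner_smul_left, real_inner_self_eq_norm_sq]
        all_goals ring
      rw [h1]
      rcases eq_or_lt_of_le ht.1 with h0 | h0
      · simp [← h0]
      · have h2 := hmono (p + t • dd) p
        rw [add_sub_cancel_left] at h2
        rw [real_inner_smul_left, norm_smul, Real.norm_eq_abs, abs_of_pos h0] at h2
        have h3 : m * t * ‖dd‖ ^ 2 ≤ ⟪dd, f' (p + t • dd) - f' p⟫ := by
          have := (mul_le_mul_iff_right₀ h0).mp (by nlinarith [h2] : t * (m * t * ‖dd‖ ^ 2) ≤ t * ⟪dd, f' (p + t • dd) - f' p⟫)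
          exact this
        rw [real_inner_comm] at h3
        linarith
    -- cocoercivity of g' via Baillon-Haddad
    have hbh := baillon_haddad g g' (L - m) hKpos hdescg hlowg
    have hco : 1 / (L - m) * ‖g' y - g' x‖ ^ 2 ≤ ⟪g' y - g' x, y - x⟫ := by
      have h1 := hbh x y
      have h2 := hbh y x
      have e1 : ‖g' x - g' y‖ = ‖g' y - g' x‖ := norm_sub_rev _ _
      rw [e1] at h2
      have e2 : ⟪g' y, x - y⟫ = -⟪g' y, y - x⟫ := by
        rw [← inner_neg_right]; congr 1; abel
      rw [e2] at h2
      have e3 : ⟪g' y - g' x, y - x⟫ = ⟪g' y, y - x⟫ - ⟪g' x, y - x⟫ := inner_sub_left _ _ _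
      have e4 : 1 / (L - m) * ‖g' y - g' x‖ ^ 2 = 2 * (1 / (2 * (L - m)) * ‖g' y - g' x‖ ^ 2) := by
        field_simp
      rw [e3, e4]
      linarith
    -- expand and conclude
    have eu : g' y - g' x = G - m • d := by
      rw [hg'def, hG, hd]; rw [smul_sub]; module
    have e5 : ‖g' y - g' x‖ ^ 2 = ‖G‖ ^ 2 - 2 * m * ⟪G, d⟫ + m ^ 2 * ‖d‖ ^ 2 := by
      rw [eu, norm_sub_sq_real, real_inner_smul_right, norm_smul, Real.norm_eq_abs]
      rw [mul_pow, sq_abs]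
      ring
    have e6 : ⟪g' y - g' x, y - x⟫ = ⟪G, d⟫ - m * ‖d‖ ^ 2 := by
      rw [eu, ← hd, inner_sub_left, real_inner_smul_left, real_inner_self_eq_norm_sq]
    rw [e5, e6] at hco
    have hmain : ‖G‖ ^ 2 - 2 * m * ⟪G, d⟫ + m ^ 2 * ‖d‖ ^ 2 ≤ (⟪G, d⟫ - m * ‖d‖ ^ 2) * (L - m) := by
      rw [← div_le_iff₀ hKpos]
      calc (‖G‖ ^ 2 - 2 * m * ⟪G, d⟫ + m ^ 2 * ‖d‖ ^ 2) / (L - m)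
          = 1 / (L - m) * (‖G‖ ^ 2 - 2 * m * ⟪G, d⟫ + m ^ 2 * ‖d‖ ^ 2) := by ring
        _ ≤ ⟪G, d⟫ - m * ‖d‖ ^ 2 := hco
    rw [show m * L / (m + L) * ‖d‖ ^ 2 + 1 / (m + L) * ‖G‖ ^ 2
        = (m * L * ‖d‖ ^ 2 + ‖G‖ ^ 2) / (m + L) from by ring, div_le_iff₀ hmLpos]
    nlinarith [hmain]
end

section
/- Consider a discrete dynamical system ξ_{k+1} = A ξ_k + B u_k with fixed point ξ⋆ = A ξ⋆ + B u⋆. Let P be symmetric positive semidefinite, N symmetric, h ≥ 0, ρ ∈ (0,1), and suppose the block matrix M = [[AᵀPA − ρ²P, AᵀPB],[BᵀPA, BᵀPB]] satisfies M + hN ⪯ 0. If for all k the vector e_k = [(ξ_k − ξ⋆)ᵀ, (u_k − u⋆)ᵀ]ᵀ satisfies e_kᵀ N e_k ≥ 0, then V(ξ_{k+1}) ≤ ρ² V(ξ_k) for all k, where V(ξ) = (ξ − ξ⋆)ᵀ P (ξ − ξ⋆). -/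
open Matrix

theorem lmi_implies_lyapunov_decrease
    (d n : ℕ)
    (A : Matrix (Fin d) (Fin d) ℝ) (B : Matrix (Fin d) (Fin n) ℝ)
    (P : Matrix (Fin d) (Fin d) ℝ) (hP : P.PosSemidef)
    (N : Matrix (Fin d ⊕ Fin n) (Fin d ⊕ Fin n) ℝ) (hN : N.IsSymm)
    (h : ℝ) (hh : 0 ≤ h) (ρ : ℝ) (hρ : ρ ∈ Set.Ioo (0 : ℝ) 1)
    (ξ : ℕ → Fin d → ℝ) (u : ℕ → Fin n → ℝ)
    (ξstar : Fin d → ℝ) (ustar : Fin n → ℝ)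
    (hdyn : ∀ k, ξ (k + 1) = A.mulVec (ξ k) + B.mulVec (u k))
    (hfix : ξstar = A.mulVec ξstar + B.mulVec ustar)
    (M : Matrix (Fin d ⊕ Fin n) (Fin d ⊕ Fin n) ℝ)
    (hM : M = fromBlocks (Aᵀ * P * A - ρ ^ 2 • P) (Aᵀ * P * B)
        (Bᵀ * P * A) (Bᵀ * P * B))
    (hLMI : ∀ v, v ⬝ᵥ (M + h • N).mulVec v ≤ 0)
    (e : ℕ → (Fin d ⊕ Fin n) → ℝ)
    (he : ∀ k, e k = Sum.elim (ξ k - ξstar) (u k - ustar))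
    (hQC : ∀ k, 0 ≤ e k ⬝ᵥ N.mulVec (e k))
    (V : (Fin d → ℝ) → ℝ)
    (hV : ∀ z, V z = (z - ξstar) ⬝ᵥ P.mulVec (z - ξstar)) :
    ∀ k, V (ξ (k + 1)) ≤ ρ ^ 2 * V (ξ k) := by
  intro k
  set x : Fin d → ℝ := ξ k - ξstar with hx
  set y : Fin n → ℝ := u k - ustar with hy
  have hz : ξ (k + 1) - ξstar = A.mulVec x + B.mulVec y := by
    rw [hdyn k]
    nth_rewrite 1 [hfix]
    simp [hx, hy, mulVec_sub]
    abel
  set z : Fin d → ℝ := A.mulVec x + B.mulVec y with hzdef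
  -- quadratic form of M
  have hMe : e k ⬝ᵥ M.mulVec (e k) = z ⬝ᵥ P.mulVec z - ρ ^ 2 * (x ⬝ᵥ P.mulVec x) := by
    rw [he k, hM, ← hx, ← hy, fromBlocks_mulVec]
    simp only [Sum.elim_comp_inl, Sum.elim_comp_inr]
    rw [sumElim_dotProduct_sumElim]
    simp only [hzdef, sub_mulVec, smul_mulVec, ← mulVec_mulVec,
      dotProduct_add, dotProduct_sub, dotProduct_smul, add_dotProduct,
      mulVec_add]
    have hA : ∀ (v : Fin d → ℝ) (w : Fin d → ℝ), x ⬝ᵥ Aᵀ.mulVec w = (A.mulVec x) ⬝ᵥ w := by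
      intro v w
      rw [dotProduct_mulVec, vecMul_transpose]
    have hB : ∀ (w : Fin d → ℝ), y ⬝ᵥ Bᵀ.mulVec w = (B.mulVec y) ⬝ᵥ w := by
      intro w
      rw [dotProduct_mulVec, vecMul_transpose]
    rw [hA x, hA x, hB, hB]
    simp only [smul_eq_mul]
    ring
  have h1 : e k ⬝ᵥ (M + h • N).mulVec (e k) ≤ 0 := hLMI _
  have h2 : e k ⬝ᵥ (M + h • N).mulVec (e k)
      = e k ⬝ᵥ M.mulVec (e k) + h * (e k ⬝ᵥ N.mulVec (e k)) := by
    simp [add_mulVec, smul_mulVec, dotProduct_add]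
  have h3 : e k ⬝ᵥ M.mulVec (e k) ≤ 0 := by
    nlinarith [hQC k]
  rw [hV, hV, hz, ← hx]
  linarith [hMe, h3]
end

section
/- Let f : ℝⁿ → ℝ be differentiable, L-smooth and m-strongly convex with minimizer x⋆, and let ρ ∈ (0,1), η ≥ 0, α > 0, 0 < c₁ ≤ c₂. Consider the AFOAGD iteration x_{k+1} = y_k − αγ_k∇f(y_k), y_k = x_k + η(x_k − x_{k−1}) with γ_k ∈ [c₁, c₂]. If there exist a PSD matrix P and h ≥ 0 such that for every k, e_kᵀ(M + (1−ρ²)N¹ + ρ²N²_k + hN³)e_k ≤ 0 holds along with the bounds f(x_{k+1}) − f(x⋆) ≤ e_kᵀN¹e_k, f(x_{k+1}) − f(x_k) ≤ e_kᵀN²_k e_k, and e_kᵀN³e_k ≥ 0, then the Lyapunov function V(ξ_k) = (ξ_k − ξ⋆)ᵀP(ξ_k − ξ⋆) + f(x_k) − f(x⋆) satisfies V(ξ_{k+1}) ≤ ρ²V(ξ_k), and hence ‖x_k − x⋆‖ ≤ ρ^k√(2V(ξ₀)/m). -/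
open Matrix

lemma dp_transpose' {m n : Type*} [Fintype m] [Fintype n]
    (A : Matrix m n ℝ) (z : n → ℝ) (w : m → ℝ) :
    z ⬝ᵥ Aᵀ *ᵥ w = (A *ᵥ z) ⬝ᵥ w := by
  rw [dotProduct_mulVec, vecMul_transpose]

lemma quad_block' {n : ℕ}
    (A : Matrix (Fin n ⊕ Fin n) (Fin n ⊕ Fin n) ℝ)
    (B : Matrix (Fin n ⊕ Fin n) (Fin n) ℝ)
    (P : Matrix (Fin n ⊕ Fin n) (Fin n ⊕ Fin n) ℝ) (ρ : ℝ)
    (z : (Fin n ⊕ Fin n) → ℝ) (u : Fin n → ℝ) :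
    Sum.elim z u ⬝ᵥ
      (fromBlocks (Aᵀ * P * A - ρ ^ 2 • P) (Aᵀ * P * B) (Bᵀ * P * A) (Bᵀ * P * B)) *ᵥ
      Sum.elim z u
    = (A *ᵥ z + B *ᵥ u) ⬝ᵥ P *ᵥ (A *ᵥ z + B *ᵥ u) - ρ ^ 2 * (z ⬝ᵥ P *ᵥ z) := by
  rw [fromBlocks_mulVec, sumElim_dotProduct_sumElim]
  simp only [Sum.elim_comp_inl, Sum.elim_comp_inr, sub_mulVec, smul_mulVec,
    ← mulVec_mulVec, dotProduct_sub, dotProduct_add, dotProduct_smul, add_dotProduct,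
    mulVec_add, dp_transpose', smul_eq_mul]
  ring

theorem afoagd_lyapunov_convergence
    (n : ℕ) (f : (Fin n → ℝ) → ℝ) (g : (Fin n → ℝ) → (Fin n → ℝ))
    (m L η α c₁ c₂ ρ : ℝ)
    (hm : 0 < m) (hmL : m ≤ L) (hη : 0 ≤ η) (hα : 0 < α)
    (hc₁ : 0 < c₁) (hc : c₁ ≤ c₂) (hρ : ρ ∈ Set.Ioo (0 : ℝ) 1)
    -- L-smoothness and m-strong convexity of f with gradient g
    (hsmooth : ∀ a b, f b ≤ f a + g a ⬝ᵥ (b - a) + (L / 2) * ((b - a) ⬝ᵥ (b - a)))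
    (hsc : ∀ a b, f a + g a ⬝ᵥ (b - a) + (m / 2) * ((b - a) ⬝ᵥ (b - a)) ≤ f b)
    (xstar : Fin n → ℝ) (hstar : g xstar = 0)
    -- AFOAGD iteration
    (x y : ℕ → Fin n → ℝ) (γ : ℕ → ℝ)
    (hγ : ∀ k, c₁ ≤ γ k ∧ γ k ≤ c₂)
    (hy : ∀ k, y k = x (k + 1) + η • (x (k + 1) - x k))
    (hx : ∀ k, x (k + 2) = y k - (α * γ k) • g (y k))
    -- state, input and combined vectors
    (ξ : ℕ → (Fin n ⊕ Fin n) → ℝ) (ξstar : (Fin n ⊕ Fin n) → ℝ)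
    (hξ : ∀ k, ξ k = Sum.elim (x k) (x (k + 1)))
    (hξstar : ξstar = Sum.elim xstar xstar)
    (u : ℕ → Fin n → ℝ) (hu : ∀ k, u k = γ k • g (y k))
    (e : ℕ → ((Fin n ⊕ Fin n) ⊕ Fin n) → ℝ)
    (he : ∀ k, e k = Sum.elim (ξ k - ξstar) (u k))
    -- state-space matrices
    (A : Matrix (Fin n ⊕ Fin n) (Fin n ⊕ Fin n) ℝ)
    (hA : A = fromBlocks 0 1 (-η • (1 : Matrix (Fin n) (Fin n) ℝ))
        ((1 + η) • (1 : Matrix (Fin n) (Fin n) ℝ)))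
    (B : Matrix (Fin n ⊕ Fin n) (Fin n) ℝ)
    (hB : B = Matrix.of (Sum.elim (fun _ _ => (0 : ℝ))
        (fun i j => if i = j then -α else 0)))
    (P : Matrix (Fin n ⊕ Fin n) (Fin n ⊕ Fin n) ℝ) (hP : P.PosSemidef)
    (h : ℝ) (hh : 0 ≤ h)
    (M : Matrix ((Fin n ⊕ Fin n) ⊕ Fin n) ((Fin n ⊕ Fin n) ⊕ Fin n) ℝ)
    (hM : M = fromBlocks (Aᵀ * P * A - ρ ^ 2 • P) (Aᵀ * P * B)
        (Bᵀ * P * A) (Bᵀ * P * B))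
    (N1 N3 : Matrix ((Fin n ⊕ Fin n) ⊕ Fin n) ((Fin n ⊕ Fin n) ⊕ Fin n) ℝ)
    (N2 : ℕ → Matrix ((Fin n ⊕ Fin n) ⊕ Fin n) ((Fin n ⊕ Fin n) ⊕ Fin n) ℝ)
    (hN1 : N1.IsSymm) (hN3 : N3.IsSymm) (hN2 : ∀ k, (N2 k).IsSymm)
    -- the quadratic bounds and the LMI along trajectories
    (hb1 : ∀ k, f (x (k + 2)) - f xstar ≤ e k ⬝ᵥ N1.mulVec (e k))
    (hb2 : ∀ k, f (x (k + 2)) - f (x (k + 1)) ≤ e k ⬝ᵥ (N2 k).mulVec (e k))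
    (hb3 : ∀ k, 0 ≤ e k ⬝ᵥ N3.mulVec (e k))
    (hLMI : ∀ k, e k ⬝ᵥ (M + (1 - ρ ^ 2) • N1 + ρ ^ 2 • N2 k
        + h • N3).mulVec (e k) ≤ 0)
    -- Lyapunov function
    (V : ℕ → ℝ)
    (hV : ∀ k, V k = (ξ k - ξstar) ⬝ᵥ P.mulVec (ξ k - ξstar)
        + f (x (k + 1)) - f xstar) :
    (∀ k, V (k + 1) ≤ ρ ^ 2 * V k) ∧
    (∀ k, Real.sqrt ((x (k + 1) - xstar) ⬝ᵥ (x (k + 1) - xstar))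
        ≤ ρ ^ k * Real.sqrt (2 * V 0 / m)) := by
  -- state update relation
  have hz : ∀ j, ξ j - ξstar = Sum.elim (x j - xstar) (x (j + 1) - xstar) := by
    intro j
    funext i
    rcases i with i | i <;> simp [hξ, hξstar]
  have hstep : ∀ k, ξ (k + 1) - ξstar = A *ᵥ (ξ k - ξstar) + B *ᵥ u k := by
    intro k
    have hAmul : ∀ p q : Fin n → ℝ,
        A *ᵥ Sum.elim p q = Sum.elim q ((-η) • p + (1 + η) • q) := by
      intro p q
      rw [hA, fromBlocks_mulVec]
      simp [smul_mulVec, neg_mulVec, neg_smul]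
    have hBmul : ∀ v : Fin n → ℝ,
        B *ᵥ v = Sum.elim (fun _ => (0 : ℝ)) ((-α) • v) := by
      intro v
      funext i
      rcases i with i | i
      · simp [hB, mulVec, dotProduct]
      · simp [hB, mulVec, dotProduct, ite_mul]
    have hx2 : x (k + 1 + 1) = y k - (α * γ k) • g (y k) := hx k
    rw [hz k, hAmul, hBmul]
    funext i
    rcases i with i | i
    · simp [hξ, hξstar]
    · simp only [hξ, hξstar, Sum.elim_inr, Pi.sub_apply, Pi.add_apply, Pi.smul_apply,
        smul_eq_mul, hx2, hy k, hu k]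
      ring
  -- quadratic form identity
  have hquad : ∀ k, e k ⬝ᵥ M *ᵥ e k
      = (ξ (k + 1) - ξstar) ⬝ᵥ P *ᵥ (ξ (k + 1) - ξstar)
        - ρ ^ 2 * ((ξ k - ξstar) ⬝ᵥ P *ᵥ (ξ k - ξstar)) := by
    intro k
    rw [he, hM, quad_block', ← hstep k]
  -- main Lyapunov decrease
  have part1 : ∀ k, V (k + 1) ≤ ρ ^ 2 * V k := by
    intro k
    have hρ2 : (0 : ℝ) ≤ 1 - ρ ^ 2 := by nlinarith [hρ.1, hρ.2]
    have h1 : (1 - ρ ^ 2) * (f (x (k + 2)) - f xstar)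
        ≤ (1 - ρ ^ 2) * (e k ⬝ᵥ N1 *ᵥ e k) :=
      mul_le_mul_of_nonneg_left (hb1 k) hρ2
    have h2 : ρ ^ 2 * (f (x (k + 2)) - f (x (k + 1)))
        ≤ ρ ^ 2 * (e k ⬝ᵥ (N2 k) *ᵥ e k) :=
      mul_le_mul_of_nonneg_left (hb2 k) (sq_nonneg ρ)
    have h3 : (0 : ℝ) ≤ h * (e k ⬝ᵥ N3 *ᵥ e k) := mul_nonneg hh (hb3 k)
    have hexp : e k ⬝ᵥ M *ᵥ e k + (1 - ρ ^ 2) * (e k ⬝ᵥ N1 *ᵥ e k)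
        + ρ ^ 2 * (e k ⬝ᵥ (N2 k) *ᵥ e k) + h * (e k ⬝ᵥ N3 *ᵥ e k) ≤ 0 := by
      have := hLMI k
      simpa [add_mulVec, smul_mulVec, dotProduct_add, dotProduct_smul,
        smul_eq_mul] using this
    have hq := hquad k
    have hVk := hV k
    have hVk2 : ρ ^ 2 * V k = ρ ^ 2 * ((ξ k - ξstar) ⬝ᵥ P *ᵥ (ξ k - ξstar))
        + ρ ^ 2 * f (x (k + 1)) - ρ ^ 2 * f xstar := by rw [hVk]; ring
    have hVk1 : V (k + 1) = (ξ (k + 1) - ξstar) ⬝ᵥ P *ᵥ (ξ (k + 1) - ξstar)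
        + f (x (k + 2)) - f xstar := hV (k + 1)
    linarith
  refine ⟨part1, ?_⟩
  -- quadratic lower bound on V
  have hlow : ∀ k, (m / 2) * ((x (k + 1) - xstar) ⬝ᵥ (x (k + 1) - xstar)) ≤ V k := by
    intro k
    have hq : (0 : ℝ) ≤ (ξ k - ξstar) ⬝ᵥ P *ᵥ (ξ k - ξstar) := by
      have := hP.dotProduct_mulVec_nonneg (ξ k - ξstar)
      simpa using this
    have hsc' := hsc xstar (x (k + 1))
    rw [hstar] at hsc'
    simp only [zero_dotProduct] at hsc'
    rw [hV k]
    linarith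
  -- geometric decay of V
  have hdecay : ∀ k, V k ≤ (ρ ^ 2) ^ k * V 0 := by
    intro k
    induction k with
    | zero => simp
    | succ k ih =>
      calc V (k + 1) ≤ ρ ^ 2 * V k := part1 k
        _ ≤ ρ ^ 2 * ((ρ ^ 2) ^ k * V 0) :=
            mul_le_mul_of_nonneg_left ih (sq_nonneg ρ)
        _ = (ρ ^ 2) ^ (k + 1) * V 0 := by ring
  intro k
  have key : (x (k + 1) - xstar) ⬝ᵥ (x (k + 1) - xstar)
      ≤ (ρ ^ k) ^ 2 * (2 * V 0 / m) := by
    have h1 := hlow k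
    have h2 := hdecay k
    have hpow : (ρ ^ 2) ^ k = (ρ ^ k) ^ 2 := by
      rw [← pow_mul, ← pow_mul, Nat.mul_comm]
    rw [hpow] at h2
    have h3 : m / 2 * ((x (k + 1) - xstar) ⬝ᵥ (x (k + 1) - xstar))
        ≤ (ρ ^ k) ^ 2 * V 0 := le_trans h1 h2
    calc (x (k + 1) - xstar) ⬝ᵥ (x (k + 1) - xstar)
        = (2 / m) * (m / 2 * ((x (k + 1) - xstar) ⬝ᵥ (x (k + 1) - xstar))) := by
          field_simp
      _ ≤ (2 / m) * ((ρ ^ k) ^ 2 * V 0) :=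
          mul_le_mul_of_nonneg_left h3 (by positivity)
      _ = (ρ ^ k) ^ 2 * (2 * V 0 / m) := by ring
  calc Real.sqrt ((x (k + 1) - xstar) ⬝ᵥ (x (k + 1) - xstar))
      ≤ Real.sqrt ((ρ ^ k) ^ 2 * (2 * V 0 / m)) := Real.sqrt_le_sqrt key
    _ = ρ ^ k * Real.sqrt (2 * V 0 / m) := by
        rw [Real.sqrt_mul (sq_nonneg _), Real.sqrt_sq (pow_nonneg hρ.1.le k)]
end
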